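/- Let G be a (P5, K5-e)-free graph containing a triangle on vertices v1, v2, v3, with Z (the set of vertices adjacent to all three triangle vertices) nonempty. For i ∈ {1,2,3} let Yi be the set of vertices outside the triangle adjacent to exactly the two triangle vertices other than vi. Then for each i, the vertex set of any connected component of the subgraph induced by Yi that has at least two vertices is anticomplete to Y_{i+1} ∪ Y_{i-1} (indices mod 3). -/

import Mathlib

open SimpleGraph

/-- The complete graph on 5 vertices minus one edge. -/
def K5e : SimpleGraph (Fin 5) := (⊤ : SimpleGraph (Fin 5)).deleteEdges {s(0, 1)}

/-- `H` has an induced copy in `G`. -/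
def HasInducedCopy {W V : Type*} (H : SimpleGraph W) (G : SimpleGraph V) : Prop :=
  ∃ f : W ↪ V, ∀ a b : W, G.Adj (f a) (f b) ↔ H.Adj a b

/-- `G` contains no induced subgraph isomorphic to `H`. -/
def IsInducedFree {V W : Type*} (G : SimpleGraph V) (H : SimpleGraph W) : Prop :=
  ¬ HasInducedCopy H G

lemma K5e_adj (a b : Fin 5) :
    K5e.Adj a b ↔ a ≠ b ∧ ¬(a = 0 ∧ b = 1) ∧ ¬(a = 1 ∧ b = 0) := by
  simp only [K5e, deleteEdges_adj, top_adj, Set.mem_singleton_iff, Sym2.eq_iff]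
  tauto

lemma no_K5e' {V : Type*} (G : SimpleGraph V) (h : IsInducedFree G K5e)
    (x0 x1 x2 x3 x4 : V)
    (d01 : x0 ≠ x1) (n01 : ¬ G.Adj x0 x1)
    (e02 : G.Adj x0 x2) (e03 : G.Adj x0 x3) (e04 : G.Adj x0 x4)
    (e12 : G.Adj x1 x2) (e13 : G.Adj x1 x3) (e14 : G.Adj x1 x4)
    (e23 : G.Adj x2 x3) (e24 : G.Adj x2 x4) (e34 : G.Adj x3 x4) : False := by
  apply h
  have d02 := e02.ne; have d03 := e03.ne; have d04 := e04.ne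
  have d12 := e12.ne; have d13 := e13.ne; have d14 := e14.ne
  have d23 := e23.ne; have d24 := e24.ne; have d34 := e34.ne
  refine ⟨⟨![x0, x1, x2, x3, x4], ?_⟩, ?_⟩
  · intro a b hab
    fin_cases a <;> fin_cases b <;> simp_all
  · intro a b
    show G.Adj (![x0, x1, x2, x3, x4] a) (![x0, x1, x2, x3, x4] b) ↔ K5e.Adj a b
    fin_cases a <;> fin_cases b <;>
      simp only [Matrix.cons_val_zero, Matrix.cons_val_one, Matrix.head_cons,
        Matrix.cons_val_two, Matrix.tail_cons, Matrix.cons_val_three, Matrix.cons_val_four,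
        K5e_adj] <;>
      simp_all [G.irrefl] <;>
      first
        | exact e02.symm | exact e03.symm | exact e04.symm
        | exact e12.symm | exact e13.symm | exact e14.symm
        | exact e23.symm | exact e24.symm | exact e34.symm
        | exact fun h' => n01 h'.symm

lemma no_P5' {V : Type*} (G : SimpleGraph V) (h : IsInducedFree G (pathGraph 5))
    (x0 x1 x2 x3 x4 : V)
    (e01 : G.Adj x0 x1) (e12 : G.Adj x1 x2) (e23 : G.Adj x2 x3) (e34 : G.Adj x3 x4)
    (n02 : ¬ G.Adj x0 x2) (n03 : ¬ G.Adj x0 x3) (n04 : ¬ G.Adj x0 x4)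
    (n13 : ¬ G.Adj x1 x3) (n14 : ¬ G.Adj x1 x4) (n24 : ¬ G.Adj x2 x4)
    (d02 : x0 ≠ x2) (d03 : x0 ≠ x3) (d04 : x0 ≠ x4)
    (d13 : x1 ≠ x3) (d14 : x1 ≠ x4) (d24 : x2 ≠ x4) : False := by
  apply h
  have d01 := e01.ne; have d12 := e12.ne; have d23 := e23.ne; have d34 := e34.ne
  refine ⟨⟨![x0, x1, x2, x3, x4], ?_⟩, ?_⟩
  · intro a b hab
    fin_cases a <;> fin_cases b <;> simp_all
  · intro a b
    show G.Adj (![x0, x1, x2, x3, x4] a) (![x0, x1, x2, x3, x4] b) ↔ (pathGraph 5).Adj a b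
    fin_cases a <;> fin_cases b <;>
      simp only [Matrix.cons_val_zero, Matrix.cons_val_one, Matrix.head_cons,
        Matrix.cons_val_two, Matrix.tail_cons, Matrix.cons_val_three, Matrix.cons_val_four,
        pathGraph_adj] <;>
      simp_all [G.irrefl] <;>
      first
        | exact e01.symm | exact e12.symm | exact e23.symm | exact e34.symm
        | exact fun h' => n02 h'.symm | exact fun h' => n03 h'.symm
        | exact fun h' => n04 h'.symm | exact fun h' => n13 h'.symm
        | exact fun h' => n14 h'.symm | exact fun h' => n24 h'.symm

theorem stmt_8 {V : Type*} (G : SimpleGraph V)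
    (hP5 : IsInducedFree G (pathGraph 5)) (hK5e : IsInducedFree G K5e)
    (v : Fin 3 → V) (hadj : ∀ i j, i ≠ j → G.Adj (v i) (v j))
    (Y : Fin 3 → Set V) (Z : Set V)
    (hY : ∀ i, Y i = {u | (∀ j, u ≠ v j) ∧ ∀ j, (G.Adj u (v j) ↔ j ≠ i)})
    (hZ : Z = {u | (∀ j, u ≠ v j) ∧ ∀ j, G.Adj u (v j)})
    (hZne : Z.Nonempty) (i : Fin 3)
    (c : (G.induce (Y i)).ConnectedComponent)
    (hbig : ∃ a ∈ c.supp, ∃ b ∈ c.supp, a ≠ b) :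
    ∀ a ∈ Subtype.val '' c.supp, ∀ b ∈ Y (i + 1) ∪ Y (i - 1), ¬ G.Adj a b := by
  obtain ⟨z, hz⟩ := hZne
  rw [hZ] at hz
  obtain ⟨hzne, hzadj⟩ := hz
  -- z is anticomplete to every Y j
  have hZY : ∀ j : Fin 3, ∀ y ∈ Y j, ¬ G.Adj y z := by
    intro j y hy hyz
    rw [hY] at hy
    obtain ⟨hyne, hyadj⟩ := hy
    have t1 : ∀ j : Fin 3, j + 1 ≠ j := by decide
    have t2 : ∀ j : Fin 3, j + 2 ≠ j := by decide
    have t3 : ∀ j : Fin 3, j + 1 ≠ j + 2 := by decide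
    exact no_K5e' G hK5e y (v j) z (v (j + 1)) (v (j + 2))
      (hyne j) (fun h => by simp [hyadj j] at h)
      hyz ((hyadj (j + 1)).mpr (t1 j)) ((hyadj (j + 2)).mpr (t2 j))
      (hzadj j).symm (hadj j (j + 1) (t1 j).symm) (hadj j (j + 2) (t2 j).symm)
      (hzadj (j + 1)) (hzadj (j + 2)) (hadj (j + 1) (j + 2) (t3 j))
  have hne1 : ∀ i : Fin 3, i + 1 ≠ i := by decide
  have hne2 : ∀ i : Fin 3, i - 1 ≠ i := by decide
  -- key claim
  have key : ∀ j : Fin 3, j ≠ i → ∀ b ∈ Y j, ∀ a a' : V, a ∈ Y i → a' ∈ Y i →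
      G.Adj a a' → ¬ G.Adj a b := by
    intro j hji b hbY a a' haY ha'Y haa' hab
    have hbY' := hbY; have haY' := haY; have ha'Y' := ha'Y
    rw [hY] at hbY haY ha'Y
    obtain ⟨hbne, hbadj⟩ := hbY
    obtain ⟨hane, haadj⟩ := haY
    obtain ⟨ha'ne, ha'adj⟩ := ha'Y
    have hij : i ≠ j := hji.symm
    by_cases hb' : G.Adj a' b
    · -- K5e on b, v j, a, a', v k where k is the third index
      obtain ⟨k, hki, hkj⟩ : ∃ k : Fin 3, k ≠ i ∧ k ≠ j := by
        have : ∀ i j : Fin 3, j ≠ i → -(i + j) ≠ i ∧ -(i + j) ≠ j := by decide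
        exact ⟨-(i + j), this i j hji⟩
      exact no_K5e' G hK5e b (v j) a a' (v k)
        (hbne j) (fun h => by simp [hbadj j] at h)
        hab.symm hb'.symm ((hbadj k).mpr hkj)
        ((haadj j).mpr hji).symm ((ha'adj j).mpr hji).symm (hadj j k (fun h => hkj h.symm))
        haa' ((haadj k).mpr hki) ((ha'adj k).mpr hki)
    · -- P5 : a' - a - b - v i - z
      have hbvi : G.Adj b (v i) := (hbadj i).mpr hij
      have ha'b : a' ≠ b := by
        intro h; subst h; exact (ha'adj i).mp hbvi rfl
      have ha'z : a' ≠ z := by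
        intro h; subst h; exact (ha'adj i).mp (hzadj i) rfl
      have haz : a ≠ z := by
        intro h; subst h; exact (haadj i).mp (hzadj i) rfl
      have hbz : b ≠ z := by
        intro h; subst h; exact (hbadj j).mp (hzadj j) rfl
      exact no_P5' G hP5 a' a b (v i) z
        haa'.symm hab hbvi (hzadj i).symm
        (fun h => hb' h) (fun h => by simp [ha'adj i] at h) (fun h => hZY i a' ha'Y' h)
        (fun h => by simp [haadj i] at h) (fun h => hZY i a haY' h)
        (fun h => hZY j b hbY' h)
        ha'b (ha'ne i) ha'z (hane i) haz hbz
  -- extract a neighbour inside the component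
  intro a ha b hb hab
  obtain ⟨a0, ha0c, rfl⟩ := ha
  have hnbr : ∃ a' : Y i, (G.induce (Y i)).Adj a0 a' := by
    obtain ⟨p, hp, q, hq, hpq⟩ := hbig
    have : ∃ t, t ∈ c.supp ∧ t ≠ a0 := by
      by_cases hpa : p = a0
      · exact ⟨q, hq, fun h => hpq (h ▸ hpa)⟩
      · exact ⟨p, hp, hpa⟩
    obtain ⟨t, htc, hta⟩ := this
    rw [ConnectedComponent.mem_supp_iff] at htc ha0c
    have hreach : (G.induce (Y i)).Reachable a0 t :=
      ConnectedComponent.exact (ha0c.trans htc.symm)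
    obtain ⟨w⟩ := hreach
    cases w with
    | nil => exact absurd rfl hta.symm
    | cons h _ => exact ⟨_, h⟩
  obtain ⟨a', hAdj⟩ := hnbr
  have hGadj : G.Adj a0.val a'.val := hAdj
  rcases hb with hb | hb
  · exact key (i + 1) (hne1 i) b hb a0.val a'.val a0.2 a'.2 hGadj hab
  · exact key (i - 1) (hne2 i) b hb a0.val a'.val a0.2 a'.2 hGadj hab
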